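/- Let G' be the output of the greedy t-spanner algorithm on a weighted connected graph G. Then the only t-spanner of G' is G' itself: if G'' is a subgraph of G' with d_{G''}(u,v) ≤ t·d_{G'}(u,v) for all u,v, then G'' = G'. -/

import Mathlib

open scoped ENNReal Classical

variable {V : Type*}

/-- The total weight of a walk: the sum of the weights of its (directed) edges. -/
noncomputable def walkWeight (w : V → V → ℝ≥0∞) {G : SimpleGraph V} {u v : V}
    (p : G.Walk u v) : ℝ≥0∞ :=
  (p.darts.map (fun d => w d.toProd.1 d.toProd.2)).sum

/-- Weighted shortest-path distance: the infimum of walk weights (`⊤` if unreachable). -/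
noncomputable def wdist (G : SimpleGraph V) (w : V → V → ℝ≥0∞) (u v : V) : ℝ≥0∞ :=
  ⨅ p : G.Walk u v, walkWeight w p

/-- One greedy pass: process the edges in the given list order, adding an edge whenever the
current spanner distance between its endpoints exceeds `t` times its weight. -/
noncomputable def greedyAux (w : V → V → ℝ≥0∞) (t : ℝ≥0∞) :
    List (V × V) → SimpleGraph V → SimpleGraph V
  | [], G' => G'
  | e :: rest, G' =>
      greedyAux w t rest
        (if t * w e.1 e.2 < wdist G' w e.1 e.2
          then G' ⊔ SimpleGraph.fromEdgeSet {s(e.1, e.2)} else G')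


open SimpleGraph

section AuxLemmas

variable {w : V → V → ℝ≥0∞}

@[simp] lemma walkWeight_nil {G : SimpleGraph V} {u : V} :
    walkWeight w (Walk.nil : G.Walk u u) = 0 := rfl

@[simp] lemma walkWeight_cons {G : SimpleGraph V} {u v x : V} (h : G.Adj u v)
    (p : G.Walk v x) : walkWeight w (Walk.cons h p) = w u v + walkWeight w p := by
  simp [walkWeight]

@[simp] lemma walkWeight_append {G : SimpleGraph V} {u v x : V} (p : G.Walk u v)
    (q : G.Walk v x) : walkWeight w (p.append q) = walkWeight w p + walkWeight w q := by
  simp [walkWeight]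

@[simp] lemma walkWeight_copy {G : SimpleGraph V} {u v u' v' : V} (p : G.Walk u v)
    (hu : u = u') (hv : v = v') : walkWeight w (p.copy hu hv) = walkWeight w p := by
  subst hu hv; rfl

lemma walkWeight_reverse (hsymm : ∀ u v, w u v = w v u) {G : SimpleGraph V} {u v : V}
    (p : G.Walk u v) : walkWeight w p.reverse = walkWeight w p := by
  rw [walkWeight, Walk.darts_reverse, List.map_reverse, List.sum_reverse, List.map_map,
    walkWeight]
  congr 1
  refine List.map_congr_left fun d _ => ?_
  simp [SimpleGraph.Dart.symm, hsymm d.toProd.1 d.toProd.2]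

lemma wdist_le {G : SimpleGraph V} {u v : V} (p : G.Walk u v) :
    wdist G w u v ≤ walkWeight w p := iInf_le _ p

lemma walkWeight_transfer {G H : SimpleGraph V} {u v : V} (p : G.Walk u v) (hp) :
    walkWeight w (p.transfer H hp) = walkWeight w p := by
  induction p with
  | nil => rfl
  | cons h p ih => exact congrArg (fun x => w _ _ + x) (ih _)

lemma darts_toProd_transfer {G H : SimpleGraph V} {u v : V} (p : G.Walk u v) (hp) :
    (p.transfer H hp).darts.map (·.toProd) = p.darts.map (·.toProd) := by
  induction p with
  | nil => rfl
  | cons h p ih => exact congrArg (List.cons _) (ih _)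

lemma wdist_anti {G H : SimpleGraph V} (h : G ≤ H) (u v : V) :
    wdist H w u v ≤ wdist G w u v := by
  refine le_iInf fun p => ?_
  refine le_trans (wdist_le (p.transfer H fun e he => edgeSet_mono h (p.edges_subset_edgeSet he)))
    ?_
  rw [walkWeight_transfer]

lemma ne_of_cond {G' : SimpleGraph V} {t : ℝ≥0∞} {a b : V}
    (h : t * w a b < wdist G' w a b) : a ≠ b := by
  rintro rfl
  have h0 : wdist G' w a a ≤ 0 := by simpa using wdist_le (w := w) (Walk.nil : G'.Walk a a)
  simp [le_zero_iff.1 h0] at h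

lemma darts_dropUntil_sublist [DecidableEq V] {G : SimpleGraph V} {u v x : V}
    (p : G.Walk u v) (h : x ∈ p.support) :
    ((p.dropUntil x h).darts).Sublist p.darts := by
  conv_rhs => rw [← Walk.take_spec p h]
  rw [Walk.darts_append]
  exact List.sublist_append_right _ _

lemma darts_bypass_sublist [DecidableEq V] {G : SimpleGraph V} {u v : V} (p : G.Walk u v) :
    p.bypass.darts.Sublist p.darts := by
  induction p with
  | nil => simp [Walk.bypass]
  | cons ha p ih =>
    simp only [Walk.bypass]
    split_ifs with hs
    · exact ((darts_dropUntil_sublist _ hs).trans ih).trans (List.sublist_cons_self _ _)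
    · rw [Walk.darts_cons, Walk.darts_cons]
      exact ih.cons₂ _

lemma walkWeight_bypass_le [DecidableEq V] {G : SimpleGraph V} {u v : V} (p : G.Walk u v) :
    walkWeight w p.bypass ≤ walkWeight w p :=
  List.Sublist.sum_le_sum ((darts_bypass_sublist p).map _) (fun _ _ => zero_le)

lemma exists_path_le [Fintype V] {G : SimpleGraph V} {u v : V}
    (h : wdist G w u v ≠ ⊤) :
    ∃ p : G.Walk u v, p.IsPath ∧ walkWeight w p ≤ wdist G w u v := by
  have hne : Nonempty (G.Walk u v) := by
    by_contra hempty
    rw [not_nonempty_iff] at hempty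
    exact h (by simp [wdist, iInf_of_empty])
  obtain ⟨p0⟩ := hne
  have : Nonempty (G.Path u v) := ⟨p0.toPath⟩
  obtain ⟨q, hq⟩ := Finite.exists_min fun q : G.Path u v => walkWeight w q.1
  refine ⟨q.1, q.2, le_iInf fun r => ?_⟩
  exact (hq r.toPath).trans (walkWeight_bypass_le r)

end AuxLemmas

section GreedyLemmas

variable {w : V → V → ℝ≥0∞}

lemma greedyAux_cons (t : ℝ≥0∞) (e : V × V) (rest : List (V × V)) (G0 : SimpleGraph V) :
    greedyAux w t (e :: rest) G0 = greedyAux w t rest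
      (if t * w e.1 e.2 < wdist G0 w e.1 e.2
        then G0 ⊔ SimpleGraph.fromEdgeSet {s(e.1, e.2)} else G0) := rfl

lemma greedyAux_append (t : ℝ≥0∞) (l₁ l₂ : List (V × V)) (G0 : SimpleGraph V) :
    greedyAux w t (l₁ ++ l₂) G0 = greedyAux w t l₂ (greedyAux w t l₁ G0) := by
  induction l₁ generalizing G0 with
  | nil => rfl
  | cons e rest ih => rw [List.cons_append, greedyAux_cons, greedyAux_cons, ih]

lemma le_greedyAux (t : ℝ≥0∞) (l : List (V × V)) (G0 : SimpleGraph V) :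
    G0 ≤ greedyAux w t l G0 := by
  induction l generalizing G0 with
  | nil => exact le_rfl
  | cons e rest ih =>
    rw [greedyAux_cons]
    refine le_trans ?_ (ih _)
    split_ifs
    · exact le_sup_left
    · exact le_rfl

lemma adj_greedyAux {t : ℝ≥0∞} {l : List (V × V)} {G0 : SimpleGraph V} {a b : V}
    (h : (greedyAux w t l G0).Adj a b) :
    G0.Adj a b ∨ ∃ l₁ e l₂, l = l₁ ++ e :: l₂ ∧ s(e.1, e.2) = s(a, b) ∧
      t * w e.1 e.2 < wdist (greedyAux w t l₁ G0) w e.1 e.2 := by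
  induction l generalizing G0 with
  | nil => exact Or.inl h
  | cons e rest ih =>
    rw [greedyAux_cons] at h
    rcases ih h with h0 | ⟨m₁, f, m₂, hrest, hsf, hcf⟩
    · by_cases hc : t * w e.1 e.2 < wdist G0 w e.1 e.2
      · rw [if_pos hc] at h0
        rcases h0 with h0 | h0
        · exact Or.inl h0
        · rw [SimpleGraph.fromEdgeSet_adj, Set.mem_singleton_iff] at h0
          exact Or.inr ⟨[], e, rest, rfl, h0.1.symm, hc⟩
      · rw [if_neg hc] at h0
        exact Or.inl h0
    · refine Or.inr ⟨e :: m₁, f, m₂, by rw [hrest]; rfl, hsf, ?_⟩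
      rwa [greedyAux_cons]

lemma sorted_aux {l l₁ l₂ : List (V × V)} {e g : V × V}
    (hs : (l.map fun e => w e.1 e.2).Pairwise (· ≤ ·)) (hl : l = l₁ ++ e :: l₂)
    (hg : g ∈ l₂) : w e.1 e.2 ≤ w g.1 g.2 := by
  subst hl
  rw [List.map_append, List.map_cons] at hs
  have h2 := (List.pairwise_append.1 hs).2.1
  exact (List.pairwise_cons.1 h2).1 _ (List.mem_map_of_mem hg)

lemma exists_dart_split {G : SimpleGraph V} {u v : V} (p : G.Walk u v)
    (Q : V × V → Prop) (h : ∃ d ∈ p.darts, ¬ Q d.toProd) :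
    ∃ (x y : V) (hxy : G.Adj x y) (p₁ : G.Walk u x) (p₂ : G.Walk y v),
      p = p₁.append (SimpleGraph.Walk.cons hxy p₂) ∧ ¬ Q (x, y) := by
  induction p with
  | nil => simp at h
  | @cons u b v ha q ih =>
    by_cases hhead : Q (u, b)
    · have h' : ∃ d ∈ q.darts, ¬ Q d.toProd := by
        obtain ⟨d, hd, hQd⟩ := h
        rw [Walk.darts_cons, List.mem_cons] at hd
        rcases hd with rfl | hd
        · exact absurd hhead hQd
        · exact ⟨d, hd, hQd⟩
      obtain ⟨x, y, hxy, p₁, p₂, heq, hQ⟩ := ih h'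
      exact ⟨x, y, hxy, Walk.cons ha p₁, p₂, by rw [Walk.cons_append, heq], hQ⟩
    · exact ⟨u, b, ha, Walk.nil, q, by rw [Walk.nil_append], hhead⟩

end GreedyLemmas

section Key

lemma greedy_key [Fintype V] (w : V → V → ℝ≥0∞) (hsymm : ∀ u v, w u v = w v u)
    (t : ℝ≥0∞) (l : List (V × V))
    (hsorted : (l.map fun e => w e.1 e.2).Pairwise (· ≤ ·))
    (G'' : SimpleGraph V) (hsub : G'' ≤ greedyAux w t l ⊥) :
    ∀ n (l₁ : List (V × V)) (e : V × V) (l₂ : List (V × V)), l = l₁ ++ e :: l₂ →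
      l₂.length = n →
      t * w e.1 e.2 < wdist (greedyAux w t l₁ ⊥) w e.1 e.2 →
      ∀ P : (greedyAux w t l ⊥).Walk e.1 e.2,
        P.edges.Nodup →
        (∀ d ∈ P.darts, G''.Adj d.toProd.1 d.toProd.2 ∨
          (greedyAux w t l₁ ⊥).Adj d.toProd.1 d.toProd.2) →
        (∀ d ∈ P.darts, s(d.toProd.1, d.toProd.2) ≠ s(e.1, e.2)) →
        walkWeight w P ≤ t * w e.1 e.2 → False := by
  intro n
  induction n using Nat.strong_induction_on with
  | _ n IH =>
  intro l₁ e l₂ hl hlen hcond P hnodup hdarts hneP hwt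
  set H₁ := greedyAux w t l₁ ⊥ with hH₁def
  set E := SimpleGraph.fromEdgeSet {s(e.1, e.2)} with hEdef
  have he12 : e.1 ≠ e.2 := ne_of_cond hcond
  have hHeq : greedyAux w t l ⊥ = greedyAux w t l₂ (H₁ ⊔ E) := by
    rw [hl, greedyAux_append, greedyAux_cons, if_pos hcond]
  have hle : H₁ ⊔ E ≤ greedyAux w t l ⊥ := by
    rw [hHeq]; exact le_greedyAux _ _ _
  by_cases hesc : ∃ d ∈ P.darts, ¬ (H₁ ⊔ E).Adj d.toProd.1 d.toProd.2
  case neg =>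
    push_neg at hesc
    have hall : ∀ d ∈ P.darts, H₁.Adj d.toProd.1 d.toProd.2 := by
      intro d hd
      rcases (SimpleGraph.sup_adj _ _ _ _).1 (hesc d hd) with h | h
      · exact h
      · rw [hEdef, SimpleGraph.fromEdgeSet_adj, Set.mem_singleton_iff] at h
        exact absurd h.1 (hneP d hd)
    have hedges : ∀ ed ∈ P.edges, ed ∈ H₁.edgeSet := by
      intro ed hed
      obtain ⟨d, hd, rfl⟩ := List.mem_map.1 hed
      exact (SimpleGraph.mem_edgeSet _).2 (hall d hd)
    have hcontr := wdist_le (w := w) (P.transfer H₁ hedges)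
    rw [walkWeight_transfer] at hcontr
    exact absurd (hcontr.trans hwt) (not_le.2 hcond)
  case pos =>
  obtain ⟨x, y, hxy, p₁, p₂, hPeq, hnxy⟩ :=
    exists_dart_split P (fun q => (H₁ ⊔ E).Adj q.1 q.2) hesc
  have hdartsP : P.darts = p₁.darts ++ ⟨(x, y), hxy⟩ :: p₂.darts := by
    rw [hPeq, Walk.darts_append, Walk.darts_cons]
  have hedgesP : P.edges = p₁.edges ++ s(x, y) :: p₂.edges := by
    rw [hPeq, Walk.edges_append, Walk.edges_cons]
  have hdmem : (⟨(x, y), hxy⟩ : (greedyAux w t l ⊥).Dart) ∈ P.darts := by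
    rw [hdartsP]; exact List.mem_append_right _ List.mem_cons_self
  have hG2xy : G''.Adj x y := by
    rcases hdarts _ hdmem with h | h
    · exact h
    · exact absurd ((SimpleGraph.sup_adj _ _ _ _).2 (Or.inl h)) hnxy
  have hHxy : (greedyAux w t l ⊥).Adj x y := hsub hG2xy
  rw [hHeq] at hHxy
  rcases adj_greedyAux hHxy with h0 | ⟨m₁, f, m₂, hl₂, hsf, hcf⟩
  · exact hnxy h0
  have hH₁' : greedyAux w t (l₁ ++ e :: m₁) ⊥ = greedyAux w t m₁ (H₁ ⊔ E) := by
    rw [greedyAux_append, greedyAux_cons, if_pos hcond]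
  have hEH₁' : H₁ ⊔ E ≤ greedyAux w t (l₁ ++ e :: m₁) ⊥ := by
    rw [hH₁']; exact le_greedyAux _ _ _
  have hlnew : l = (l₁ ++ e :: m₁) ++ f :: m₂ := by
    rw [hl, hl₂]; simp
  have hmlt : m₂.length < n := by
    rw [hl₂] at hlen; simp at hlen; omega
  have hwef : w e.1 e.2 ≤ w f.1 f.2 :=
    sorted_aux hsorted hl (by rw [hl₂]; exact List.mem_append_right _ List.mem_cons_self)
  have hExy : s(e.1, e.2) ≠ s(x, y) := by
    intro hh
    exact hnxy ((SimpleGraph.sup_adj _ _ _ _).2 (Or.inr ((SimpleGraph.fromEdgeSet_adj _).2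
      ⟨Set.mem_singleton_iff.2 hh.symm, hxy.ne⟩)))
  have heH : (H₁ ⊔ E).Adj e.1 e.2 :=
    (SimpleGraph.sup_adj _ _ _ _).2 (Or.inr ((SimpleGraph.fromEdgeSet_adj _).2 ⟨rfl, he12⟩))
  have heHbig : (greedyAux w t l ⊥).Adj e.1 e.2 := hle heH
  rw [hedgesP] at hnodup
  have hdisj0 := List.disjoint_of_nodup_append hnodup
  have hxy_not₁ : s(x, y) ∉ p₁.edges := fun hmem => hdisj0 hmem List.mem_cons_self
  have hnd := hnodup.of_append_right
  have hxy_not₂ : s(x, y) ∉ p₂.edges := (List.nodup_cons.1 hnd).1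
  have hnd₂ : p₂.edges.Nodup := (List.nodup_cons.1 hnd).2
  have hnd₁ : p₁.edges.Nodup := hnodup.of_append_left
  have hdisj : List.Disjoint p₁.edges p₂.edges := fun _ ha hb =>
    hdisj0 ha (List.mem_cons_of_mem _ hb)
  have hse_not₁ : s(e.1, e.2) ∉ p₁.edges := by
    intro hmem
    obtain ⟨d, hd, hde⟩ := List.mem_map.1 hmem
    exact hneP d (by rw [hdartsP]; exact List.mem_append_left _ hd) hde
  have hse_not₂ : s(e.1, e.2) ∉ p₂.edges := by
    intro hmem
    obtain ⟨d, hd, hde⟩ := List.mem_map.1 hmem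
    refine hneP d ?_ hde
    rw [hdartsP]
    exact List.mem_append_right _ (List.mem_cons_of_mem _ hd)
  have hwP : walkWeight w p₁ + (w x y + walkWeight w p₂) ≤ t * w e.1 e.2 := by
    rw [hPeq] at hwt
    simpa using hwt
  have key : ∀ Q : (greedyAux w t l ⊥).Walk f.1 f.2,
      Q.edges.Nodup →
      (∀ d ∈ Q.darts, G''.Adj d.toProd.1 d.toProd.2 ∨
        (greedyAux w t (l₁ ++ e :: m₁) ⊥).Adj d.toProd.1 d.toProd.2) →
      (∀ d ∈ Q.darts, s(d.toProd.1, d.toProd.2) ≠ s(f.1, f.2)) →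
      walkWeight w Q ≤ t * w f.1 f.2 → False := by
    intro Q h1 h2 h3 h4
    exact IH m₂.length hmlt (l₁ ++ e :: m₁) f m₂ hlnew rfl
      (by rw [hH₁']; exact hcf) Q h1 h2 h3 h4
  have hdartmem₁ : ∀ d ∈ p₁.darts, d ∈ P.darts := fun d hd => by
    rw [hdartsP]; exact List.mem_append_left _ hd
  have hdartmem₂ : ∀ d ∈ p₂.darts, d ∈ P.darts := fun d hd => by
    rw [hdartsP]; exact List.mem_append_right _ (List.mem_cons_of_mem _ hd)
  rcases Sym2.eq_iff.1 hsf with ⟨hf1, hf2⟩ | ⟨hf1, hf2⟩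
  · -- f = (x, y)
    refine key ((p₁.reverse.append (Walk.cons heHbig p₂.reverse)).copy hf1.symm hf2.symm)
      ?_ ?_ ?_ ?_
    · rw [Walk.edges_copy, Walk.edges_append, Walk.edges_cons, Walk.edges_reverse,
        Walk.edges_reverse, List.nodup_append]
      refine ⟨by simpa using hnd₁, ?_, ?_⟩
      · rw [List.nodup_cons]
        exact ⟨by simpa using hse_not₂, by simpa using hnd₂⟩
      · intro a ha b hb hab
        subst hab
        rw [List.mem_reverse] at ha
        rcases List.mem_cons.1 hb with rfl | hb
        · exact hse_not₁ ha
        · exact hdisj ha (List.mem_reverse.1 hb)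
    · intro d hd
      rw [Walk.darts_copy, Walk.darts_append, Walk.darts_cons, Walk.darts_reverse,
        Walk.darts_reverse] at hd
      rcases List.mem_append.1 hd with hd | hd
      · obtain ⟨d₀, hd₀, rfl⟩ := List.mem_map.1 (List.mem_reverse.1 hd)
        rcases hdarts d₀ (hdartmem₁ d₀ hd₀) with h | h
        · exact Or.inl h.symm
        · exact Or.inr (hEH₁' ((SimpleGraph.sup_adj _ _ _ _).2 (Or.inl h.symm)))
      · rcases List.mem_cons.1 hd with rfl | hd
        · exact Or.inr (hEH₁' heH)
        · obtain ⟨d₀, hd₀, rfl⟩ := List.mem_map.1 (List.mem_reverse.1 hd)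
          rcases hdarts d₀ (hdartmem₂ d₀ hd₀) with h | h
          · exact Or.inl h.symm
          · exact Or.inr (hEH₁' ((SimpleGraph.sup_adj _ _ _ _).2 (Or.inl h.symm)))
    · intro d hd hh
      rw [hsf] at hh
      rw [Walk.darts_copy, Walk.darts_append, Walk.darts_cons, Walk.darts_reverse,
        Walk.darts_reverse] at hd
      rcases List.mem_append.1 hd with hd | hd
      · obtain ⟨d₀, hd₀, rfl⟩ := List.mem_map.1 (List.mem_reverse.1 hd)
        refine hxy_not₁ (List.mem_map.2 ⟨d₀, hd₀, ?_⟩)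
        exact (Sym2.eq_swap).trans hh
      · rcases List.mem_cons.1 hd with rfl | hd
        · exact hExy hh
        · obtain ⟨d₀, hd₀, rfl⟩ := List.mem_map.1 (List.mem_reverse.1 hd)
          refine hxy_not₂ (List.mem_map.2 ⟨d₀, hd₀, ?_⟩)
          exact (Sym2.eq_swap).trans hh
    · rw [walkWeight_copy, walkWeight_append, walkWeight_cons,
        walkWeight_reverse hsymm, walkWeight_reverse hsymm]
      have hwxy : w e.1 e.2 ≤ w x y := by rwa [hf1, hf2] at hwef
      calc walkWeight w p₁ + (w e.1 e.2 + walkWeight w p₂)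
          ≤ walkWeight w p₁ + (w x y + walkWeight w p₂) := by gcongr
        _ ≤ t * w e.1 e.2 := hwP
        _ ≤ t * w f.1 f.2 := mul_le_mul_right hwef t
  · -- f = (y, x)
    refine key ((p₂.append (Walk.cons heHbig.symm p₁)).copy hf1.symm hf2.symm)
      ?_ ?_ ?_ ?_
    · rw [Walk.edges_copy, Walk.edges_append, Walk.edges_cons, List.nodup_append]
      have hswap : s(e.2, e.1) = s(e.1, e.2) := Sym2.eq_swap
      refine ⟨hnd₂, ?_, ?_⟩
      · rw [List.nodup_cons, hswap]
        exact ⟨hse_not₁, hnd₁⟩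
      · intro a ha b hb hab
        subst hab
        rcases List.mem_cons.1 hb with rfl | hb
        · exact hse_not₂ (hswap ▸ ha)
        · exact hdisj hb ha
    · intro d hd
      rw [Walk.darts_copy, Walk.darts_append, Walk.darts_cons] at hd
      rcases List.mem_append.1 hd with hd | hd
      · rcases hdarts d (hdartmem₂ d hd) with h | h
        · exact Or.inl h
        · exact Or.inr (hEH₁' ((SimpleGraph.sup_adj _ _ _ _).2 (Or.inl h)))
      · rcases List.mem_cons.1 hd with rfl | hd
        · exact Or.inr (hEH₁' heH.symm)
        · rcases hdarts d (hdartmem₁ d hd) with h | h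
          · exact Or.inl h
          · exact Or.inr (hEH₁' ((SimpleGraph.sup_adj _ _ _ _).2 (Or.inl h)))
    · intro d hd hh
      rw [hsf] at hh
      rw [Walk.darts_copy, Walk.darts_append, Walk.darts_cons] at hd
      rcases List.mem_append.1 hd with hd | hd
      · exact hxy_not₂ (List.mem_map.2 ⟨d, hd, hh⟩)
      · rcases List.mem_cons.1 hd with rfl | hd
        · exact hExy ((Sym2.eq_swap).trans hh)
        · exact hxy_not₁ (List.mem_map.2 ⟨d, hd, hh⟩)
    · rw [walkWeight_copy, walkWeight_append, walkWeight_cons]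
      have hwxy : w e.1 e.2 ≤ w x y := by
        rw [hf1, hf2, hsymm y x] at hwef; exact hwef
      have hrw : w e.2 e.1 = w e.1 e.2 := (hsymm e.2 e.1).symm ▸ rfl
      calc walkWeight w p₂ + (w e.2 e.1 + walkWeight w p₁)
          = walkWeight w p₁ + (w e.2 e.1 + walkWeight w p₂) := by ring
        _ = walkWeight w p₁ + (w e.1 e.2 + walkWeight w p₂) := by rw [← hsymm]
        _ ≤ walkWeight w p₁ + (w x y + walkWeight w p₂) := by gcongr
        _ ≤ t * w e.1 e.2 := hwP
        _ ≤ t * w f.1 f.2 := mul_le_mul_right hwef t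

end Key

/-- Filtser–Solomon, Lemma 3: the only `t`-spanner of a greedy `t`-spanner `G'` is `G'`
itself: if `G'' ≤ G'` satisfies `d_{G''}(u,v) ≤ t · d_{G'}(u,v)` for all `u, v`,
then `G'' = G'`. -/
theorem greedy_spanner_rigid [Fintype V]
    (G : SimpleGraph V) (hconn : G.Connected)
    (w : V → V → ℝ≥0∞) (hsymm : ∀ u v, w u v = w v u)
    (hpos : ∀ u v, G.Adj u v → 0 < w u v) (hfin : ∀ u v, G.Adj u v → w u v ≠ ⊤)
    (t : ℝ≥0∞) (ht : 1 ≤ t)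
    (l : List (V × V))
    (hl₁ : ∀ e ∈ l, G.Adj e.1 e.2)
    (hl₂ : ∀ u v : V, G.Adj u v → (u, v) ∈ l ∨ (v, u) ∈ l)
    (hsorted : (l.map (fun e => w e.1 e.2)).Pairwise (· ≤ ·))
    (G'' : SimpleGraph V) (hsub : G'' ≤ greedyAux w t l ⊥)
    (hspan : ∀ u v : V, wdist G'' w u v ≤ t * wdist (greedyAux w t l ⊥) w u v) :
    G'' = greedyAux w t l ⊥ := by
  refine le_antisymm hsub ?_
  intro a b hab
  rcases adj_greedyAux hab with h0 | ⟨l₁, e, l₂, hl, hs, hcond⟩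
  · simp at h0
  have he12 : e.1 ≠ e.2 := ne_of_cond hcond
  have hkey : G''.Adj e.1 e.2 := by
    by_contra hno
    have hle : greedyAux w t l₁ ⊥ ⊔ SimpleGraph.fromEdgeSet {s(e.1, e.2)} ≤
        greedyAux w t l ⊥ := by
      conv_rhs => rw [hl, greedyAux_append, greedyAux_cons, if_pos hcond]
      exact le_greedyAux _ _ _
    have heH : (greedyAux w t l ⊥).Adj e.1 e.2 :=
      hle ((SimpleGraph.sup_adj _ _ _ _).2 (Or.inr
        ((SimpleGraph.fromEdgeSet_adj _).2 ⟨rfl, he12⟩)))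
    have h1 : wdist G'' w e.1 e.2 ≤ t * w e.1 e.2 := by
      refine (hspan e.1 e.2).trans (mul_le_mul_right ?_ t)
      have := wdist_le (w := w) (Walk.cons heH Walk.nil)
      simpa using this
    have htop : t * w e.1 e.2 ≠ ⊤ := hcond.ne_top
    have hfin' : wdist G'' w e.1 e.2 ≠ ⊤ := by
      intro hT
      rw [hT] at h1
      exact htop (top_le_iff.1 h1)
    obtain ⟨P₀, hP₀path, hP₀w⟩ := exists_path_le hfin'
    have hPedges : ∀ ed ∈ P₀.edges, ed ∈ (greedyAux w t l ⊥).edgeSet := fun ed hed =>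
      SimpleGraph.edgeSet_mono hsub (P₀.edges_subset_edgeSet hed)
    have hdmem : ∀ d ∈ (P₀.transfer _ hPedges).darts, ∃ d₀ ∈ P₀.darts,
        d₀.toProd = d.toProd := by
      intro d hd
      have hmem : d.toProd ∈ P₀.darts.map (·.toProd) := by
        rw [← darts_toProd_transfer P₀ hPedges]
        exact List.mem_map_of_mem hd
      obtain ⟨d₀, h₀, he⟩ := List.mem_map.1 hmem
      exact ⟨d₀, h₀, he⟩
    refine greedy_key w hsymm t l hsorted G'' hsub l₂.length l₁ e l₂ hl rfl hcond
      (P₀.transfer _ hPedges) ?_ ?_ ?_ ?_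
    · rw [Walk.edges_transfer]
      exact hP₀path.isTrail.edges_nodup
    · intro d hd
      obtain ⟨d₀, h₀, he⟩ := hdmem d hd
      left
      rw [← he]
      exact d₀.adj
    · intro d hd hcontra
      obtain ⟨d₀, h₀, he⟩ := hdmem d hd
      rw [← he] at hcontra
      have hadj := d₀.adj
      rcases Sym2.eq_iff.1 hcontra with ⟨ha, hb⟩ | ⟨ha, hb⟩
      · exact hno (by rw [← ha, ← hb]; exact hadj)
      · exact hno (by rw [← ha, ← hb]; exact hadj.symm)
    · rw [walkWeight_transfer]
      exact hP₀w.trans h1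
  rcases Sym2.eq_iff.1 hs with ⟨ha, hb⟩ | ⟨ha, hb⟩
  · rw [← ha, ← hb]; exact hkey
  · rw [← ha, ← hb]; exact hkey.symm
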